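/- Let F : E ⥤ B be a functor with a right adjoint G, with unit η. For a morphism f : B ⟶ A in E, the commutative square with top f, left η_B, right η_A, and bottom G(F(f)) is a pullback square if and only if f is F-cartesian (i.e., for every g : C ⟶ A in E and b : F(C) ⟶ F(B) in B with F(g) = F(f) ≫ b, there is a unique u : C ⟶ B with F(u) = b and u ≫ f = g). -/
import Mathlib


open CategoryTheory Limits

universe v₁ v₂ u₁ u₂

/-- A morphism `f : X ⟶ Y` of `E` is *cartesian* with respect to a functor `F : E ⥤ B` if
for every `g : Z ⟶ Y` in `E` and `b : F(Z) ⟶ F(X)` in `B` with `F(g) = b ≫ F(f)`, there is a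
unique `u : Z ⟶ X` with `F(u) = b` and `u ≫ f = g`. -/
def IsCart {E : Type u₁} {B : Type u₂} [Category.{v₁} E] [Category.{v₂} B]
    (F : E ⥤ B) {X Y : E} (f : X ⟶ Y) : Prop :=
  ∀ ⦃Z : E⦄ (g : Z ⟶ Y) (b : F.obj Z ⟶ F.obj X),
    F.map g = b ≫ F.map f → ∃! u : Z ⟶ X, F.map u = b ∧ u ≫ f = g

/-- Composing with the unit computes `homEquiv` applied to an image morphism. -/
lemma comp_unit_eq_homEquiv {E : Type u₁} {B : Type u₂}
    [Category.{v₁} E] [Category.{v₂} B]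
    (F : E ⥤ B) (G : B ⥤ E) (adj : F ⊣ G) {Z X : E} (u : Z ⟶ X) :
    u ≫ adj.unit.app X = adj.homEquiv Z (F.obj X) (F.map u) := by
  rw [Adjunction.homEquiv_unit]
  exact adj.unit.naturality u

/-- Fact 2.2: given an adjunction `F ⊣ G` with unit `η`, the square with top `f : X ⟶ Y`,
left `η_X`, right `η_Y` and bottom `G(F(f))` is a pullback if and only if `f` is
`F`-cartesian. -/
theorem pullback_iff_cartesian {E : Type u₁} {B : Type u₂}
    [Category.{v₁} E] [Category.{v₂} B]
    (F : E ⥤ B) (G : B ⥤ E) (adj : F ⊣ G) {X Y : E} (f : X ⟶ Y) :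
    IsPullback f (adj.unit.app X) (adj.unit.app Y) (G.map (F.map f)) ↔ IsCart F f := by
  constructor
  · intro hp Z g b hb
    have hcomm : g ≫ adj.unit.app Y =
        (adj.homEquiv Z (F.obj X) b) ≫ G.map (F.map f) := by
      rw [Adjunction.homEquiv_unit, Category.assoc, ← G.map_comp, ← hb]
      exact adj.unit.naturality g
    refine ⟨hp.lift g (adj.homEquiv Z (F.obj X) b) hcomm, ⟨?_, hp.lift_fst ..⟩, ?_⟩
    · apply (adj.homEquiv Z (F.obj X)).injective
      rw [← comp_unit_eq_homEquiv F G adj]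
      exact hp.lift_snd ..
    · rintro v ⟨hv1, hv2⟩
      apply hp.hom_ext
      · rw [hv2, hp.lift_fst]
      · rw [comp_unit_eq_homEquiv F G adj, hv1, hp.lift_snd]
  · intro hc
    have w : CommSq f (adj.unit.app X) (adj.unit.app Y) (G.map (F.map f)) :=
      ⟨adj.unit.naturality f⟩
    have key : ∀ s : PullbackCone (adj.unit.app Y) (G.map (F.map f)),
        F.map s.fst = (adj.homEquiv s.pt (F.obj X)).symm s.snd ≫ F.map f := by
      intro s
      apply (adj.homEquiv s.pt (F.obj Y)).injective
      rw [Adjunction.homEquiv_naturality_right]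
      simp only [Equiv.apply_symm_apply]
      rw [Adjunction.homEquiv_unit]
      exact (adj.unit.naturality s.fst).symm.trans s.condition
    refine IsPullback.of_isLimit' w (PullbackCone.IsLimit.mk _
      (fun s => (hc s.fst _ (key s)).exists.choose) ?_ ?_ ?_)
    · intro s
      exact (hc s.fst _ (key s)).exists.choose_spec.2
    · intro s
      have h := (hc s.fst _ (key s)).exists.choose_spec.1
      rw [comp_unit_eq_homEquiv F G adj, h, Equiv.apply_symm_apply]
    · intro s m h1 h2
      refine (hc s.fst _ (key s)).unique ⟨?_, h1⟩
        ⟨(hc s.fst _ (key s)).exists.choose_spec.1,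
         (hc s.fst _ (key s)).exists.choose_spec.2⟩
      apply (adj.homEquiv s.pt (F.obj X)).injective
      rw [← comp_unit_eq_homEquiv F G adj, h2, Equiv.apply_symm_apply]
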